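/- The Chen iterated-integral map Υ^t is a shuffle algebra homomorphism: for all words v, w, Υ^t(v ⧢ w) = Υ^t(v) · Υ^t(w). -/

import Mathlib

/-- The shuffle product of two words, as a multiset of words (with multiplicities). -/
def shuffles {α : Type*} : List α → List α → Multiset (List α)
  | [], w => {w}
  | a :: v, [] => {a :: v}
  | a :: v, b :: w =>
      ((shuffles v (b :: w)).map (a :: ·)) + ((shuffles (a :: v) w).map (b :: ·))

/-- Auxiliary form of the Chen iterated integral, where the head of the list is the letter
of the outermost integral. -/
noncomputable def chenRev {α : Type*} (u : α → ℝ → ℝ) : List α → ℝ → ℝ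
  | [], _ => 1
  | a :: v, t => ∫ s in (0:ℝ)..t, chenRev u v s * u a s

/-- The Chen iterated integral `Υ^t(v)`, defined by `Υ^t(1) = 1` and
`Υ^t(v·a_i) = ∫_0^t Υ^s(v) u_i(s) ds`. -/
noncomputable def chen {α : Type*} (u : α → ℝ → ℝ) (v : List α) (t : ℝ) : ℝ :=
  chenRev u v.reverse t


lemma shuffles_nil_left {α : Type*} (w : List α) : shuffles [] w = {w} := by
  cases w <;> simp [shuffles]

lemma shuffles_nil_right {α : Type*} (v : List α) : shuffles v [] = {v} := by
  cases v <;> simp [shuffles]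

lemma shuffles_cons_cons {α : Type*} (a b : α) (v w : List α) :
    shuffles (a :: v) (b :: w) =
      ((shuffles v (b :: w)).map (a :: ·)) + ((shuffles (a :: v) w).map (b :: ·)) := by
  simp [shuffles]

lemma shuffles_append_last {α : Type*} : ∀ (v w : List α) (c d : α),
    shuffles (v ++ [c]) (w ++ [d]) =
      ((shuffles v (w ++ [d])).map (· ++ [c])) + ((shuffles (v ++ [c]) w).map (· ++ [d]))
  | [], [], c, d => by
      simp only [List.nil_append, shuffles_cons_cons, shuffles_nil_left, shuffles_nil_right]
      simp only [Multiset.map_singleton, List.singleton_append, List.cons_append, List.nil_append]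
      abel
  | [], b :: w, c, d => by
      have IH := shuffles_append_last ([] : List α) w c d
      simp only [List.nil_append, List.cons_append] at *
      rw [shuffles_cons_cons c b, IH, shuffles_cons_cons c b]
      simp only [shuffles_nil_left, shuffles_nil_right, Multiset.map_singleton,
        Multiset.map_add, Multiset.map_map, Function.comp_def, List.cons_append]
      abel
  | a :: v, [], c, d => by
      have IH := shuffles_append_last v ([] : List α) c d
      simp only [List.nil_append, List.cons_append] at *
      rw [shuffles_cons_cons a d, IH, shuffles_cons_cons a d]
      simp only [shuffles_nil_left, shuffles_nil_right, Multiset.map_singleton,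
        Multiset.map_add, Multiset.map_map, Function.comp_def, List.cons_append, List.append_assoc, List.singleton_append]
      abel
  | a :: v, b :: w, c, d => by
      have IH1 := shuffles_append_last v (b :: w) c d
      have IH2 := shuffles_append_last (a :: v) w c d
      simp only [List.cons_append] at *
      rw [shuffles_cons_cons a b (v ++ [c]) (w ++ [d]), IH1, IH2,
        shuffles_cons_cons a b v (w ++ [d]), shuffles_cons_cons a b (v ++ [c]) w]
      simp only [Multiset.map_add, Multiset.map_map, Function.comp_def, List.cons_append]
      abel
  termination_by v w => v.length + w.length

lemma shuffles_reverse {α : Type*} : ∀ (v w : List α),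
    shuffles v.reverse w.reverse = (shuffles v w).map List.reverse
  | [], w => by simp [shuffles_nil_left]
  | a :: v, [] => by simp [shuffles_nil_left, shuffles_nil_right]
  | a :: v, b :: w => by
      have IH1 := shuffles_reverse v (b :: w)
      have IH2 := shuffles_reverse (a :: v) w
      rw [shuffles_cons_cons]
      simp only [List.reverse_cons]
      rw [shuffles_append_last, ← List.reverse_cons, ← List.reverse_cons, IH1, IH2]
      simp [Multiset.map_map, Function.comp_def]
  termination_by v w => v.length + w.length


open MeasureTheory intervalIntegral Set

lemma triangle_swap {f g : ℝ → ℝ} {t : ℝ} (ht : 0 ≤ t)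
    (hf : IntegrableOn f (Set.Icc 0 t)) (hg : IntegrableOn g (Set.Icc 0 t)) :
    (∫ x in (0:ℝ)..t, f x * ∫ y in x..t, g y)
      = ∫ x in (0:ℝ)..t, (∫ y in (0:ℝ)..x, f y) * g x := by
  set μ := volume.restrict (Set.Ioc (0:ℝ) t) with hμ
  have hfμ : Integrable f μ := hf.mono_set Set.Ioc_subset_Icc_self
  have hgμ : Integrable g μ := hg.mono_set Set.Ioc_subset_Icc_self
  set Φ : ℝ → ℝ → ℝ := fun x y => if x < y then f x * g y else 0 with hΦ
  have hint : Integrable (Function.uncurry Φ) (μ.prod μ) := by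
    have h1 : Integrable (fun p : ℝ × ℝ => f p.1 * g p.2) (μ.prod μ) := hfμ.mul_prod hgμ
    have h2 := h1.indicator (s := {p : ℝ × ℝ | p.1 < p.2})
      (measurableSet_lt measurable_fst measurable_snd)
    refine h2.congr (Filter.Eventually.of_forall fun p => ?_)
    simp [Function.uncurry, Set.indicator_apply, hΦ]
  have claim1 : ∀ x ∈ Set.Ioc (0:ℝ) t, f x * (∫ y in x..t, g y) = ∫ y, Φ x y ∂μ := by
    intro x hx
    have h1 : (fun y => Φ x y) = fun y => f x * (Set.Ioi x).indicator g y := by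
      ext y; simp [hΦ, Set.indicator_apply, Set.mem_Ioi]
    rw [h1, MeasureTheory.integral_const_mul, hμ, MeasureTheory.integral_indicator measurableSet_Ioi]
    have h2 : Set.Ioc 0 t ∩ Set.Ioi x = Set.Ioc x t := by
      ext y
      simp only [Set.mem_inter_iff, Set.mem_Ioc, Set.mem_Ioi]
      constructor
      · rintro ⟨⟨_, hy2⟩, hy3⟩; exact ⟨hy3, hy2⟩
      · rintro ⟨hy1, hy2⟩; exact ⟨⟨hx.1.trans hy1, hy2⟩, hy1⟩
    rw [Measure.restrict_restrict measurableSet_Ioi, Set.inter_comm, h2,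
      intervalIntegral.integral_of_le hx.2]
  have claim2 : ∀ y ∈ Set.Ioc (0:ℝ) t, (∫ x, Φ x y ∂μ) = (∫ x in (0:ℝ)..y, f x) * g y := by
    intro y hy
    have h1 : (fun x => Φ x y) = fun x => (Set.Iio y).indicator f x * g y := by
      ext x; simp [hΦ, Set.indicator_apply, Set.mem_Iio]
    rw [h1, MeasureTheory.integral_mul_const, hμ, MeasureTheory.integral_indicator measurableSet_Iio]
    have h2 : Set.Ioc 0 t ∩ Set.Iio y = Set.Ioo 0 y := by
      ext x
      simp only [Set.mem_inter_iff, Set.mem_Ioc, Set.mem_Iio, Set.mem_Ioo]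
      constructor
      · rintro ⟨⟨hx1, _⟩, hx3⟩; exact ⟨hx1, hx3⟩
      · rintro ⟨hx1, hx2⟩; exact ⟨⟨hx1, (le_of_lt hx2).trans hy.2⟩, hx2⟩
    rw [Measure.restrict_restrict measurableSet_Iio, Set.inter_comm, h2,
      intervalIntegral.integral_of_le hy.1.le, integral_Ioc_eq_integral_Ioo]
  rw [intervalIntegral.integral_of_le ht, intervalIntegral.integral_of_le ht]
  calc ∫ x in Set.Ioc (0:ℝ) t, f x * ∫ y in x..t, g y
      = ∫ x, (∫ y, Φ x y ∂μ) ∂μ :=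
        setIntegral_congr_fun measurableSet_Ioc fun x hx => claim1 x hx
    _ = ∫ y, (∫ x, Φ x y ∂μ) ∂μ := integral_integral_swap hint
    _ = ∫ x in Set.Ioc (0:ℝ) t, (∫ y in (0:ℝ)..x, f y) * g x :=
        setIntegral_congr_fun measurableSet_Ioc fun y hy => claim2 y hy

lemma prod_integral {f g : ℝ → ℝ} {t : ℝ} (ht : 0 ≤ t)
    (hf : IntegrableOn f (Set.Icc 0 t)) (hg : IntegrableOn g (Set.Icc 0 t)) :
    (∫ x in (0:ℝ)..t, f x) * (∫ x in (0:ℝ)..t, g x)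
      = (∫ x in (0:ℝ)..t, f x * ∫ y in (0:ℝ)..x, g y)
        + (∫ x in (0:ℝ)..t, (∫ y in (0:ℝ)..x, f y) * g x) := by
  have huIcc : Set.uIcc (0:ℝ) t = Set.Icc 0 t := Set.uIcc_of_le ht
  have hfu : IntegrableOn f (Set.uIcc 0 t) := by rwa [huIcc]
  have hgu : IntegrableOn g (Set.uIcc 0 t) := by rwa [huIcc]
  have hfi : IntervalIntegrable f volume 0 t := hfu.intervalIntegrable
  have hgi : IntervalIntegrable g volume 0 t := hgu.intervalIntegrable
  have hGc : ContinuousOn (fun x => ∫ y in (0:ℝ)..x, g y) (Set.Icc 0 t) := by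
    rw [← huIcc]; exact intervalIntegral.continuousOn_primitive_interval hgu
  have hFc : ContinuousOn (fun x => ∫ y in (0:ℝ)..x, f y) (Set.Icc 0 t) := by
    rw [← huIcc]; exact intervalIntegral.continuousOn_primitive_interval hfu
  have hTc : ContinuousOn (fun x => ∫ y in x..t, g y) (Set.Icc 0 t) := by
    rw [← huIcc]; exact intervalIntegral.continuousOn_primitive_interval_left hgu
  have hfG : IntervalIntegrable (fun x => f x * ∫ y in (0:ℝ)..x, g y) volume 0 t := by
    rw [intervalIntegrable_iff_integrableOn_Icc_of_le ht]
    exact hf.mul_continuousOn hGc isCompact_Icc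
  have hfT : IntervalIntegrable (fun x => f x * ∫ y in x..t, g y) volume 0 t := by
    rw [intervalIntegrable_iff_integrableOn_Icc_of_le ht]
    exact hf.mul_continuousOn hTc isCompact_Icc
  calc (∫ x in (0:ℝ)..t, f x) * (∫ x in (0:ℝ)..t, g x)
      = ∫ x in (0:ℝ)..t, f x * ∫ y in (0:ℝ)..t, g y :=
        (intervalIntegral.integral_mul_const _ _).symm
    _ = ∫ x in (0:ℝ)..t, (f x * ∫ y in (0:ℝ)..x, g y) + f x * ∫ y in x..t, g y := by
        apply intervalIntegral.integral_congr
        intro x hx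
        rw [huIcc] at hx
        dsimp only
        have h0m : (0:ℝ) ∈ Set.uIcc 0 t := by rw [huIcc]; exact ⟨le_refl 0, ht⟩
        have htm : t ∈ Set.uIcc (0:ℝ) t := by rw [huIcc]; exact ⟨ht, le_refl t⟩
        have hxm : x ∈ Set.uIcc (0:ℝ) t := by rw [huIcc]; exact hx
        rw [← mul_add, intervalIntegral.integral_add_adjacent_intervals
          (hgi.mono_set (Set.uIcc_subset_uIcc h0m hxm))
          (hgi.mono_set (Set.uIcc_subset_uIcc hxm htm))]
    _ = (∫ x in (0:ℝ)..t, f x * ∫ y in (0:ℝ)..x, g y)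
        + (∫ x in (0:ℝ)..t, f x * ∫ y in x..t, g y) :=
        intervalIntegral.integral_add hfG hfT
    _ = (∫ x in (0:ℝ)..t, f x * ∫ y in (0:ℝ)..x, g y)
        + (∫ x in (0:ℝ)..t, (∫ y in (0:ℝ)..x, f y) * g x) := by
        rw [triangle_swap ht hf hg]

section
variable {α : Type*} {u : α → ℝ → ℝ} {T M : ℝ}

lemma chenRev_nil (t : ℝ) : chenRev u ([] : List α) t = 1 := rfl

lemma chenRev_cons (a : α) (v : List α) (t : ℝ) :
    chenRev u (a :: v) t = ∫ s in (0:ℝ)..t, chenRev u v s * u a s := rfl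

lemma chenRev_reg (hT : 0 ≤ T) (hM : 0 ≤ M)
    (hmeas : ∀ i, Measurable (u i)) (hbd : ∀ i s, s ∈ Set.Icc (0 : ℝ) T → |u i s| ≤ M) :
    ∀ v : List α, ContinuousOn (chenRev u v) (Set.Icc 0 T) ∧
      ∀ s ∈ Set.Icc (0:ℝ) T, |chenRev u v s| ≤ (M * T + 1) ^ v.length := by
  have hMT : 0 ≤ M * T := mul_nonneg hM hT
  intro v
  induction v with
  | nil =>
      refine ⟨continuousOn_const, fun s _ => ?_⟩
      simp [chenRev_nil]
  | cons a v ih =>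
      obtain ⟨ihc, ihb⟩ := ih
      set h : ℝ → ℝ := fun s => chenRev u v s * u a s with hh
      have hbnd : ∀ s ∈ Set.Icc (0:ℝ) T, |h s| ≤ (M * T + 1) ^ v.length * M := by
        intro s hs
        rw [hh, abs_mul]
        exact mul_le_mul (ihb s hs) (hbd a s hs) (abs_nonneg _)
          (pow_nonneg (by linarith) _)
      have hint : IntegrableOn h (Set.Icc 0 T) := by
        have hm : AEStronglyMeasurable h (volume.restrict (Set.Icc 0 T)) := by
          exact ((ihc.aemeasurable measurableSet_Icc).mul
            (hmeas a).aemeasurable.restrict).aestronglyMeasurable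
        refine ⟨hm, ?_⟩
        apply MeasureTheory.HasFiniteIntegral.restrict_of_bounded
          (C := (M * T + 1) ^ v.length * M) measure_Icc_lt_top
        filter_upwards [ae_restrict_mem measurableSet_Icc] with s hs
        simpa [Real.norm_eq_abs] using hbnd s hs
      constructor
      · have := intervalIntegral.continuousOn_primitive_interval
          (a := (0:ℝ)) (b := T) (μ := volume) (f := h) (by rwa [Set.uIcc_of_le hT])
        rw [Set.uIcc_of_le hT] at this
        exact this
      · intro s hs
        rw [chenRev_cons]
        have hb2 : ∀ x ∈ Set.uIoc (0:ℝ) s, ‖h x‖ ≤ (M * T + 1) ^ v.length * M := by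
          intro x hx
          rw [Set.uIoc_of_le hs.1] at hx
          exact hbnd x ⟨hx.1.le, hx.2.trans hs.2⟩
        have := intervalIntegral.norm_integral_le_of_norm_le_const hb2
        rw [Real.norm_eq_abs] at this
        calc |∫ x in (0:ℝ)..s, h x| ≤ (M * T + 1) ^ v.length * M * |s - 0| := this
          _ ≤ (M * T + 1) ^ v.length * M * T := by
              apply mul_le_mul_of_nonneg_left _ (by positivity)
              rw [sub_zero, abs_of_nonneg hs.1]; exact hs.2
          _ ≤ (M * T + 1) ^ (v.length + 1) := by
              rw [pow_succ]
              have h1 : (0:ℝ) ≤ (M * T + 1) ^ v.length := by positivity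
              nlinarith
end

lemma chenRev_mul_integrableOn {α : Type*} {u : α → ℝ → ℝ} {T M : ℝ}
    (hT : 0 ≤ T) (hM : 0 ≤ M)
    (hmeas : ∀ i, Measurable (u i)) (hbd : ∀ i s, s ∈ Set.Icc (0 : ℝ) T → |u i s| ≤ M)
    (v : List α) (a : α) :
    IntegrableOn (fun s => chenRev u v s * u a s) (Set.Icc 0 T) := by
  obtain ⟨ihc, ihb⟩ := chenRev_reg hT hM hmeas hbd v
  have hbnd : ∀ s ∈ Set.Icc (0:ℝ) T, |chenRev u v s * u a s| ≤ (M * T + 1) ^ v.length * M := by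
    intro s hs
    rw [abs_mul]
    exact mul_le_mul (ihb s hs) (hbd a s hs) (abs_nonneg _) (by positivity)
  have hm : AEStronglyMeasurable (fun s => chenRev u v s * u a s)
      (volume.restrict (Set.Icc 0 T)) :=
    ((ihc.aemeasurable measurableSet_Icc).mul (hmeas a).aemeasurable.restrict).aestronglyMeasurable
  refine ⟨hm, ?_⟩
  apply MeasureTheory.HasFiniteIntegral.restrict_of_bounded
    (C := (M * T + 1) ^ v.length * M) measure_Icc_lt_top
  filter_upwards [ae_restrict_mem measurableSet_Icc] with s hs
  rw [Real.norm_eq_abs]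
  exact hbnd s hs

lemma multiset_integral_sum {β : Type*} {t : ℝ} (m : Multiset β) (F : β → ℝ → ℝ)
    (h : ∀ b ∈ m, IntervalIntegrable (F b) volume 0 t) :
    IntervalIntegrable (fun s => (m.map fun b => F b s).sum) volume 0 t ∧
      (m.map fun b => ∫ s in (0:ℝ)..t, F b s).sum
        = ∫ s in (0:ℝ)..t, (m.map fun b => F b s).sum := by
  induction m using Multiset.induction with
  | empty => simp
  | cons c m ih =>
      have h1 := h c (Multiset.mem_cons_self _ _)
      have h2 := ih fun b hb => h b (Multiset.mem_cons_of_mem hb)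
      constructor
      · simpa [Multiset.map_cons, Multiset.sum_cons] using h1.add h2.1
      · simp only [Multiset.map_cons, Multiset.sum_cons]
        rw [intervalIntegral.integral_add h1 h2.1, h2.2]

lemma chenRev_shuffle {α : Type*} {u : α → ℝ → ℝ} {T M : ℝ}
    (hT : 0 ≤ T) (hM : 0 ≤ M)
    (hmeas : ∀ i, Measurable (u i)) (hbd : ∀ i s, s ∈ Set.Icc (0 : ℝ) T → |u i s| ≤ M) :
    ∀ (v w : List α), ∀ t ∈ Set.Icc (0:ℝ) T,
      ((shuffles v w).map fun z => chenRev u z t).sum = chenRev u v t * chenRev u w t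
  | [], w => by
      intro t ht
      simp [shuffles_nil_left, chenRev_nil]
  | a :: v, [] => by
      intro t ht
      simp [shuffles_nil_right, chenRev_nil]
  | a :: v, b :: w => by
      intro t ht
      have h0t : (0:ℝ) ≤ t := ht.1
      have htT : t ≤ T := ht.2
      have hsub : Set.Icc (0:ℝ) t ⊆ Set.Icc 0 T := Set.Icc_subset_Icc le_rfl htT
      have hII : ∀ (z : List α) (c : α),
          IntervalIntegrable (fun s => chenRev u z s * u c s) volume 0 t := by
        intro z c
        have := (chenRev_mul_integrableOn hT hM hmeas hbd z c).mono_set hsub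
        rw [← Set.uIcc_of_le h0t] at this
        exact this.intervalIntegrable
      have IH1 := chenRev_shuffle hT hM hmeas hbd v (b :: w)
      have IH2 := chenRev_shuffle hT hM hmeas hbd (a :: v) w
      have hmem : ∀ s ∈ Set.uIcc (0:ℝ) t, s ∈ Set.Icc (0:ℝ) T := by
        intro s hs
        rw [Set.uIcc_of_le h0t] at hs
        exact hsub hs
      -- sum over first part
      have part1 : ((shuffles v (b :: w)).map fun z => chenRev u (a :: z) t).sum
          = ∫ s in (0:ℝ)..t, chenRev u v s * chenRev u (b :: w) s * u a s := by
        have e1 : ((shuffles v (b :: w)).map fun z => chenRev u (a :: z) t).sum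
            = ((shuffles v (b :: w)).map fun z => ∫ s in (0:ℝ)..t, chenRev u z s * u a s).sum := by
          simp only [chenRev_cons]
        rw [e1, (multiset_integral_sum _ _ fun z _ => hII z a).2]
        apply intervalIntegral.integral_congr
        intro s hs
        have hsT := hmem s hs
        dsimp only
        rw [Multiset.sum_map_mul_right, IH1 s hsT]
      have part2 : ((shuffles (a :: v) w).map fun z => chenRev u (b :: z) t).sum
          = ∫ s in (0:ℝ)..t, chenRev u (a :: v) s * chenRev u w s * u b s := by
        have e1 : ((shuffles (a :: v) w).map fun z => chenRev u (b :: z) t).sum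
            = ((shuffles (a :: v) w).map fun z => ∫ s in (0:ℝ)..t, chenRev u z s * u b s).sum := by
          simp only [chenRev_cons]
        rw [e1, (multiset_integral_sum _ _ fun z _ => hII z b).2]
        apply intervalIntegral.integral_congr
        intro s hs
        have hsT := hmem s hs
        dsimp only
        rw [Multiset.sum_map_mul_right, IH2 s hsT]
      have lhs_eq : ((shuffles (a :: v) (b :: w)).map fun z => chenRev u z t).sum
          = (∫ s in (0:ℝ)..t, chenRev u v s * chenRev u (b :: w) s * u a s)
            + ∫ s in (0:ℝ)..t, chenRev u (a :: v) s * chenRev u w s * u b s := by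
        rw [shuffles_cons_cons, Multiset.map_add, Multiset.sum_add,
          Multiset.map_map, Multiset.map_map, Function.comp_def, Function.comp_def,
          part1, part2]
      rw [lhs_eq]
      -- now the analytic side
      have hf : IntegrableOn (fun s => chenRev u v s * u a s) (Set.Icc 0 t) :=
        (chenRev_mul_integrableOn hT hM hmeas hbd v a).mono_set hsub
      have hg : IntegrableOn (fun s => chenRev u w s * u b s) (Set.Icc 0 t) :=
        (chenRev_mul_integrableOn hT hM hmeas hbd w b).mono_set hsub
      have := prod_integral h0t hf hg
      rw [chenRev_cons a v t, chenRev_cons b w t, this]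
      congr 1
      · apply intervalIntegral.integral_congr
        intro s _
        dsimp only
        rw [← chenRev_cons b w s]
        ring
      · apply intervalIntegral.integral_congr
        intro s _
        dsimp only
        rw [← chenRev_cons a v s]
        ring
  termination_by v w => v.length + w.length


/-- The Chen iterated-integral map is a shuffle algebra homomorphism:
`Υ^t(v ⧢ w) = Υ^t(v) · Υ^t(w)` for all words `v, w`. -/
theorem stmt4 {n : ℕ} (T M : ℝ) (u : Fin (n + 1) → ℝ → ℝ)
    (hmeas : ∀ i, Measurable (u i))
    (hbd : ∀ i s, s ∈ Set.Icc (0 : ℝ) T → |u i s| ≤ M)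
    (v w : List (Fin (n + 1))) (t : ℝ) (ht : t ∈ Set.Icc (0 : ℝ) T) :
    ((shuffles v w).map fun z => chen u z t).sum = chen u v t * chen u w t := by
  have hT : (0:ℝ) ≤ T := le_trans ht.1 ht.2
  have hM : (0:ℝ) ≤ M := le_trans (abs_nonneg (u 0 0)) (hbd 0 0 ⟨le_rfl, hT⟩)
  calc ((shuffles v w).map fun z => chen u z t).sum
      = (((shuffles v w).map List.reverse).map fun z => chenRev u z t).sum := by
        rw [Multiset.map_map]; rfl
    _ = ((shuffles v.reverse w.reverse).map fun z => chenRev u z t).sum := by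
        rw [shuffles_reverse]
    _ = chenRev u v.reverse t * chenRev u w.reverse t :=
        chenRev_shuffle hT hM hmeas hbd _ _ t ht
    _ = chen u v t * chen u w t := rfl
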